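/- Let (p_n)_{n≥1} be a ℚ-linearly independent sequence in (0, ∞) with 0 < p_n < 2^{−n} for all n, let P_n := { r·p_n : r ∈ ℚ, r > 0 }, let P := ⋃_n P_n, let H be the positive rational cone generated by a ℚ-linearly independent set B ⊇ {p_n : n ≥ 1}, and for each n pick a rational q_n with 1 − 2^{−n} < p_n·q_n < 1. Define f : H → H by f(x) = q_n·x if x ∈ P_n and x ≤ p_n, f(x) = x + p_n·(q_n − 1) if x ∈ P_n and x > p_n, and f(x) = x if x ∈ H \ P. Then f is a bijection of H onto H and f(x + y) ≤ f(x) + f(y) for all x, y ∈ H. -/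

import Mathlib

theorem glued_map_subadditive_bijection
    (B : Set ℝ) (hB : B ⊆ Set.Ioi 0)
    (hBind : LinearIndependent ℚ ((↑) : B → ℝ))
    (p : ℕ → ℝ) (hpB : ∀ n : ℕ, 1 ≤ n → p n ∈ B)
    (hpind : LinearIndependent ℚ (fun n : {n : ℕ // 1 ≤ n} => p n))
    (hp : ∀ n : ℕ, 1 ≤ n → 0 < p n ∧ p n < (2 : ℝ) ^ (-(n : ℤ)))
    (q : ℕ → ℚ) (hq : ∀ n : ℕ, 1 ≤ n →
      1 - (2 : ℝ) ^ (-(n : ℤ)) < p n * (q n : ℝ) ∧ p n * (q n : ℝ) < 1)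
    (Pn : ℕ → Set ℝ)
    (hPn : ∀ n : ℕ, Pn n = {x : ℝ | ∃ r : ℚ, 0 < r ∧ x = (r : ℝ) * p n})
    (P : Set ℝ) (hPdef : P = ⋃ n ∈ {n : ℕ | 1 ≤ n}, Pn n)
    (H : Set ℝ)
    (hH : H = {x : ℝ | ∃ s : Finset ℝ, ↑s ⊆ B ∧ s.Nonempty ∧
      ∃ c : ℝ → ℚ, (∀ b ∈ s, 0 < c b) ∧ x = ∑ b ∈ s, (c b : ℝ) * b})
    (f : ℝ → ℝ)
    (hfPn : ∀ n : ℕ, 1 ≤ n → ∀ x ∈ Pn n,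
      (x ≤ p n → f x = (q n : ℝ) * x) ∧ (p n < x → f x = x + p n * ((q n : ℝ) - 1)))
    (hfid : ∀ x ∈ H, x ∉ P → f x = x) :
    Set.BijOn f H H ∧ ∀ x ∈ H, ∀ y ∈ H, f (x + y) ≤ f x + f y := by
  classical
  -- zero-combination lemma
  have hBzero : ∀ (s : Finset ℝ), ↑s ⊆ B → ∀ c : ℝ → ℚ,
      ∑ b ∈ s, (c b : ℝ) * b = 0 → ∀ b ∈ s, c b = 0 := by
    intro s hs c h0 b hb
    have key := linearIndependent_iff'.mp hBind
    let t : Finset ↥B := s.attach.image (fun x => (⟨x.1, hs x.2⟩ : ↥B))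
    have hsum : ∑ i ∈ t, (c i.1) • (i.1 : ℝ) = 0 := by
      rw [Finset.sum_image]
      · rw [← h0]
        rw [← Finset.sum_attach s (fun x => (c x : ℝ) * x)]
        simp [Rat.smul_def]
      · intro x hx y hy hxy
        exact Subtype.ext (by simpa using hxy)
    have := key t (fun i => c i.1) hsum ⟨b, hs hb⟩ ?_
    · exact this
    · simp only [t, Finset.mem_image, Finset.mem_attach]
      exact ⟨⟨b, hb⟩, trivial, rfl⟩
  have hppos : ∀ n, 1 ≤ n → 0 < p n := fun n hn => (hp n hn).1
  have hpinj : ∀ n m : ℕ, 1 ≤ n → 1 ≤ m → p n = p m → n = m := by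
    intro n m hn hm h
    have := hpind.injective (a₁ := ⟨n, hn⟩) (a₂ := ⟨m, hm⟩) h
    exact congrArg Subtype.val this
  have hqgt1 : ∀ n, 1 ≤ n → 1 < (q n : ℝ) := by
    intro n hn
    by_contra hle
    push_neg at hle
    have h2 : (2 : ℝ) ^ (-(n : ℤ)) ≤ 2⁻¹ := by
      have : (2 : ℝ) ^ (-(n : ℤ)) ≤ (2 : ℝ) ^ (-(1 : ℤ)) := by
        apply zpow_le_zpow_right₀ (by norm_num)
        omega
      simpa using this
    have hpn := hp n hn
    have hpq := hq n hn
    have hle2 : p n * (q n : ℝ) ≤ p n := mul_le_of_le_one_right hpn.1.le hle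
    linarith [hpq.1, hpn.2]
  have hq1Q : ∀ n, 1 ≤ n → 1 < q n := by
    intro n hn; exact_mod_cast hqgt1 n hn
  have hmemP : ∀ x, x ∈ P ↔ ∃ n, 1 ≤ n ∧ x ∈ Pn n := by
    intro x
    rw [hPdef]
    simp only [Set.mem_iUnion, Set.mem_setOf_eq, exists_prop]
  have hPn_sub_H : ∀ n, 1 ≤ n → Pn n ⊆ H := by
    intro n hn x hx
    rw [hPn] at hx
    obtain ⟨r, hr, rfl⟩ := hx
    rw [hH]
    exact ⟨{p n}, by simpa using hpB n hn, Finset.singleton_nonempty _, fun _ => r,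
      by simp [hr], by simp⟩
  -- addition of representations
  have hrep_add : ∀ (s t : Finset ℝ) (c d : ℝ → ℚ),
      (∑ b ∈ s, (c b : ℝ) * b) + (∑ b ∈ t, (d b : ℝ) * b)
        = ∑ b ∈ s ∪ t, ((((if b ∈ s then c b else 0) + (if b ∈ t then d b else 0) : ℚ)) : ℝ) * b := by
    intro s t c d
    push_cast
    simp only [apply_ite (fun z : ℚ => (z : ℝ)), Rat.cast_zero, add_mul, ite_mul, zero_mul,
      Finset.sum_add_distrib, Finset.sum_ite_mem, Finset.union_inter_cancel_left,
      Finset.union_inter_cancel_right]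
  have hHadd : ∀ x ∈ H, ∀ y ∈ H, x + y ∈ H := by
    intro x hx y hy
    rw [hH] at hx hy ⊢
    obtain ⟨s, hsB, hsne, c, hc, rfl⟩ := hx
    obtain ⟨t, htB, htne, d, hd, rfl⟩ := hy
    refine ⟨s ∪ t, ?_, hsne.mono Finset.subset_union_left,
      fun b => (if b ∈ s then c b else 0) + (if b ∈ t then d b else 0), ?_, hrep_add s t c d⟩
    · push_cast
      exact Set.union_subset hsB htB
    · intro b hb
      show 0 < (if b ∈ s then c b else 0) + (if b ∈ t then d b else 0)
      rcases Finset.mem_union.mp hb with hb' | hb'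
      · have h1 : 0 < (if b ∈ s then c b else 0) := by simp [hb', hc b hb']
        have h2 : 0 ≤ (if b ∈ t then d b else 0) := by
          split
          · exact (hd b (by assumption)).le
          · exact le_refl 0
        linarith
      · have h1 : 0 < (if b ∈ t then d b else 0) := by simp [hb', hd b hb']
        have h2 : 0 ≤ (if b ∈ s then c b else 0) := by
          split
          · exact (hc b (by assumption)).le
          · exact le_refl 0
        linarith
  -- if a cone element lies in Pn n, its support is {p n}
  have hkey : ∀ (s : Finset ℝ), ↑s ⊆ B → s.Nonempty → ∀ c : ℝ → ℚ, (∀ b ∈ s, 0 < c b) →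
      ∀ n, 1 ≤ n → (∑ b ∈ s, (c b : ℝ) * b) ∈ Pn n → s = {p n} := by
    intro s hsB hne c hc n hn hx
    rw [hPn] at hx
    obtain ⟨r, hr, hxr⟩ := hx
    have hs'B : ↑(insert (p n) s) ⊆ B := by
      push_cast
      exact Set.insert_subset (hpB n hn) hsB
    set d : ℝ → ℚ := fun b => (if b ∈ s then c b else 0) - (if b = p n then r else 0) with hd
    have hsum0 : ∑ b ∈ insert (p n) s, (d b : ℝ) * b = 0 := by
      push_cast [hd]
      simp only [apply_ite (fun z : ℚ => (z : ℝ)), Rat.cast_zero, sub_mul, ite_mul, zero_mul,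
        Finset.sum_sub_distrib, Finset.sum_ite_mem, Finset.sum_ite_eq']
      rw [Finset.inter_eq_right.mpr (Finset.subset_insert (p n) s)]
      rw [if_pos (Finset.mem_insert_self (p n) s), sub_eq_zero, ← hxr]
    have hz := hBzero (insert (p n) s) hs'B d hsum0
    have hsub : ∀ b ∈ s, b = p n := by
      intro b hb
      by_contra hne'
      have := hz b (Finset.mem_insert_of_mem hb)
      simp [hd, hb, hne'] at this
      exact absurd this (ne_of_gt (hc b hb))
    obtain ⟨b0, hb0⟩ := hne
    exact Finset.eq_singleton_iff_unique_mem.mpr ⟨hsub b0 hb0 ▸ hb0, hsub⟩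
  have hsplit : ∀ x ∈ H, ∀ y ∈ H, ∀ n, 1 ≤ n → x + y ∈ Pn n → x ∈ Pn n ∧ y ∈ Pn n := by
    intro x hx y hy n hn hxy
    rw [hH] at hx hy
    obtain ⟨s, hsB, hsne, c, hc, rfl⟩ := hx
    obtain ⟨t, htB, htne, d, hd, rfl⟩ := hy
    rw [hrep_add s t c d] at hxy
    have hposu : ∀ b ∈ s ∪ t, 0 < (if b ∈ s then c b else 0) + (if b ∈ t then d b else 0) := by
      intro b hb
      rcases Finset.mem_union.mp hb with hb' | hb'
      · have h1 : 0 < (if b ∈ s then c b else 0) := by simp [hb', hc b hb']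
        have h2 : 0 ≤ (if b ∈ t then d b else 0) := by
          split
          · exact (hd b (by assumption)).le
          · exact le_refl 0
        linarith
      · have h1 : 0 < (if b ∈ t then d b else 0) := by simp [hb', hd b hb']
        have h2 : 0 ≤ (if b ∈ s then c b else 0) := by
          split
          · exact (hc b (by assumption)).le
          · exact le_refl 0
        linarith
    have hst := hkey (s ∪ t) (by push_cast; exact Set.union_subset hsB htB)
      (hsne.mono Finset.subset_union_left) _ hposu n hn hxy
    have hs1 : s = {p n} := by
      rcases Finset.subset_singleton_iff.mp (hst ▸ Finset.subset_union_left (s₁ := s) (s₂ := t)) with h | h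
      · exact absurd h hsne.ne_empty
      · exact h
    have ht1 : t = {p n} := by
      rcases Finset.subset_singleton_iff.mp (hst ▸ Finset.subset_union_right (s₁ := s) (s₂ := t)) with h | h
      · exact absurd h htne.ne_empty
      · exact h
    constructor
    · rw [hPn]
      exact ⟨c (p n), hc (p n) (by simp [hs1]), by rw [hs1]; simp⟩
    · rw [hPn]
      exact ⟨d (p n), hd (p n) (by simp [ht1]), by rw [ht1]; simp⟩
  have hPn_disj : ∀ n m, 1 ≤ n → 1 ≤ m → ∀ x, x ∈ Pn n → x ∈ Pn m → n = m := by
    intro n m hn hm x h1 h2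
    by_contra hnm
    have hpne : p n ≠ p m := fun h => hnm (hpinj n m hn hm h)
    rw [hPn] at h1 h2
    obtain ⟨r, hr, rfl⟩ := h1
    obtain ⟨u, hu, h2'⟩ := h2
    have hzero : ∑ b ∈ ({p n, p m} : Finset ℝ), ((if b = p n then r else -u : ℚ) : ℝ) * b = 0 := by
      rw [Finset.sum_pair hpne]
      simp only [if_pos rfl, if_neg hpne.symm]
      push_cast
      linarith [h2']
    have := hBzero {p n, p m} (by
        push_cast
        exact Set.insert_subset (hpB n hn) (by simpa using hpB m hm))
      (fun b => if b = p n then r else -u) hzero (p n) (by simp)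
    simp at this
    exact absurd this (ne_of_gt hr)
  -- value of f on Pn n
  have hfval : ∀ n, 1 ≤ n → ∀ r : ℚ, 0 < r →
      f ((r : ℝ) * p n) = ((if r ≤ 1 then q n * r else r + q n - 1 : ℚ) : ℝ) * p n := by
    intro n hn r hr
    have hp0 := hppos n hn
    have hmem : (r : ℝ) * p n ∈ Pn n := by rw [hPn]; exact ⟨r, hr, rfl⟩
    have hfx := hfPn n hn _ hmem
    by_cases h1 : r ≤ 1
    · have hr1 : (r : ℝ) ≤ 1 := by exact_mod_cast h1
      have : (r : ℝ) * p n ≤ p n := by nlinarith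
      rw [hfx.1 this, if_pos h1]
      push_cast
      ring
    · have hr1 : (1 : ℝ) < r := by exact_mod_cast lt_of_not_ge h1
      have : p n < (r : ℝ) * p n := by nlinarith
      rw [hfx.2 this, if_neg h1]
      push_cast
      ring
  have hg_inj : ∀ n, 1 ≤ n → ∀ r u : ℚ, 0 < r → 0 < u →
      (if r ≤ 1 then q n * r else r + q n - 1) = (if u ≤ 1 then q n * u else u + q n - 1) →
      r = u := by
    intro n hn r u hr hu h
    have hq1 := hq1Q n hn
    split_ifs at h with h1 h2 h2
    · exact mul_left_cancel₀ (by linarith) h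
    · push_neg at h2; nlinarith
    · push_neg at h1; nlinarith
    · linarith
  have hg_surj : ∀ n, 1 ≤ n → ∀ t : ℚ, 0 < t → ∃ r : ℚ, 0 < r ∧
      (if r ≤ 1 then q n * r else r + q n - 1) = t := by
    intro n hn t ht
    have hq1 := hq1Q n hn
    by_cases h : t ≤ q n
    · refine ⟨t / q n, by positivity, ?_⟩
      rw [if_pos (by rw [div_le_one (by linarith)]; exact h)]
      field_simp
    · push_neg at h
      refine ⟨t - q n + 1, by linarith, ?_⟩
      rw [if_neg (by rw [not_le]; linarith)]
      ring
  have hg_subadd : ∀ n, 1 ≤ n → ∀ r u : ℚ, 0 < r → 0 < u →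
      (if r + u ≤ 1 then q n * (r + u) else (r + u) + q n - 1) ≤
      (if r ≤ 1 then q n * r else r + q n - 1) + (if u ≤ 1 then q n * u else u + q n - 1) := by
    intro n hn r u hr hu
    have hq1 := hq1Q n hn
    split_ifs with h1 h2 h3 h2 h3 h3 h3 <;> (try push_neg at *) <;> nlinarith
  have hfmem : ∀ n, 1 ≤ n → ∀ x ∈ Pn n, f x ∈ Pn n := by
    intro n hn x hx
    rw [hPn] at hx ⊢
    obtain ⟨r, hr, rfl⟩ := hx
    rw [hfval n hn r hr]
    refine ⟨_, ?_, rfl⟩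
    have hq1 := hq1Q n hn
    split_ifs with h1
    · nlinarith
    · push_neg at h1; nlinarith
  have hfge : ∀ z ∈ H, z ≤ f z := by
    intro z hz
    by_cases hzP : z ∈ P
    · obtain ⟨n, hn, hzn⟩ := (hmemP z).mp hzP
      rw [hPn] at hzn
      obtain ⟨r, hr, rfl⟩ := hzn
      rw [hfval n hn r hr]
      have hp0 := hppos n hn
      have hq1 := hq1Q n hn
      have : r ≤ (if r ≤ 1 then q n * r else r + q n - 1) := by
        split_ifs with h1
        · nlinarith
        · linarith
      have hcast : (r : ℝ) ≤ ((if r ≤ 1 then q n * r else r + q n - 1 : ℚ) : ℝ) := by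
        exact_mod_cast this
      nlinarith
    · rw [hfid z hz hzP]
  have hmaps : Set.MapsTo f H H := by
    intro x hx
    by_cases hxP : x ∈ P
    · obtain ⟨n, hn, hxn⟩ := (hmemP x).mp hxP
      exact hPn_sub_H n hn (hfmem n hn x hxn)
    · rw [hfid x hx hxP]; exact hx
  have hinj : Set.InjOn f H := by
    intro x hx y hy hfxy
    by_cases hxP : x ∈ P
    · obtain ⟨n, hn, hxn⟩ := (hmemP x).mp hxP
      by_cases hyP : y ∈ P
      · obtain ⟨m, hm, hym⟩ := (hmemP y).mp hyP
        have hfxm := hfmem n hn x hxn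
        have hfym := hfmem m hm y hym
        have hnm : n = m := hPn_disj n m hn hm (f x) hfxm (hfxy ▸ hfym)
        subst hnm
        rw [hPn] at hxn hym
        obtain ⟨r, hr, rfl⟩ := hxn
        obtain ⟨u, hu, rfl⟩ := hym
        rw [hfval n hn r hr, hfval n hn u hu] at hfxy
        have hp0 := hppos n hn
        have heq : ((if r ≤ 1 then q n * r else r + q n - 1 : ℚ) : ℝ)
            = ((if u ≤ 1 then q n * u else u + q n - 1 : ℚ) : ℝ) :=
          mul_right_cancel₀ (ne_of_gt hp0) hfxy
        have : r = u := hg_inj n hn r u hr hu (by exact_mod_cast heq)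
        rw [this]
      · exfalso
        apply hyP
        rw [← hfid y hy hyP, ← hfxy]
        exact (hmemP _).mpr ⟨n, hn, hfmem n hn x hxn⟩
    · by_cases hyP : y ∈ P
      · exfalso
        obtain ⟨m, hm, hym⟩ := (hmemP y).mp hyP
        apply hxP
        rw [← hfid x hx hxP, hfxy]
        exact (hmemP _).mpr ⟨m, hm, hfmem m hm y hym⟩
      · rw [hfid x hx hxP, hfid y hy hyP] at hfxy
        exact hfxy
  have hsurj : Set.SurjOn f H H := by
    intro y hy
    by_cases hyP : y ∈ P
    · obtain ⟨n, hn, hyn⟩ := (hmemP y).mp hyP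
      rw [hPn] at hyn
      obtain ⟨t, ht, rfl⟩ := hyn
      obtain ⟨r, hr, hgr⟩ := hg_surj n hn t ht
      refine ⟨(r : ℝ) * p n, hPn_sub_H n hn (by rw [hPn]; exact ⟨r, hr, rfl⟩), ?_⟩
      rw [hfval n hn r hr, hgr]
    · exact ⟨y, hy, hfid y hy hyP⟩
  refine ⟨⟨hmaps, hinj, hsurj⟩, ?_⟩
  intro x hx y hy
  have hxyH := hHadd x hx y hy
  by_cases hxyP : x + y ∈ P
  · obtain ⟨n, hn, hxyn⟩ := (hmemP _).mp hxyP
    obtain ⟨hxn, hyn⟩ := hsplit x hx y hy n hn hxyn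
    rw [hPn] at hxn hyn
    obtain ⟨r, hr, rfl⟩ := hxn
    obtain ⟨u, hu, rfl⟩ := hyn
    have hsum : (r : ℝ) * p n + (u : ℝ) * p n = ((r + u : ℚ) : ℝ) * p n := by
      push_cast; ring
    rw [hsum, hfval n hn _ (add_pos hr hu), hfval n hn r hr, hfval n hn u hu]
    have hcast : ((if r + u ≤ 1 then q n * (r + u) else (r + u) + q n - 1 : ℚ) : ℝ) ≤
        ((if r ≤ 1 then q n * r else r + q n - 1 : ℚ) : ℝ)
        + ((if u ≤ 1 then q n * u else u + q n - 1 : ℚ) : ℝ) := by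
      exact_mod_cast hg_subadd n hn r u hr hu
    have hp0 := hppos n hn
    nlinarith
  · rw [hfid _ hxyH hxyP]
    linarith [hfge x hx, hfge y hy]
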